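/- Let n ≥ 1 and let θ, b₁, …, bₙ : Fin m → ℝ be monotone (nondecreasing) tuples, with coordinatewise mean b̄ l = (∑ i, bᵢ l)/n. Let D(x,y) denote the squared matching distance D(x,y) = min over permutations σ of Fin m of ∑ l, (x l − y (σ l))². Then ∑ i, D(θ, bᵢ) = n · D(θ, b̄) + ∑ i, D(b̄, bᵢ). -/

import Mathlib

/-- The squared matching distance between two tuples in `Fin m → ℝ`: the minimum over
all permutations `σ` of `Fin m` of the total squared matching cost. -/
noncomputable def matchDist (m : ℕ) (x y : Fin m → ℝ) : ℝ :=
  ⨅ σ : Equiv.Perm (Fin m), ∑ l, (x l - y (σ l)) ^ 2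

lemma matchDist_of_monotone (m : ℕ) (x y : Fin m → ℝ) (hx : Monotone x) (hy : Monotone y) :
    matchDist m x y = ∑ l, (x l - y l) ^ 2 := by
  have hbdd : BddBelow (Set.range fun σ : Equiv.Perm (Fin m) => ∑ l, (x l - y (σ l)) ^ 2) := by
    refine ⟨0, ?_⟩
    rintro r ⟨σ, rfl⟩
    exact Finset.sum_nonneg fun l _ => sq_nonneg _
  refine le_antisymm ?_ ?_
  · have := ciInf_le hbdd (1 : Equiv.Perm (Fin m))
    simpa [matchDist] using this
  · refine le_ciInf fun σ => ?_
    have hmono : Monovary x y := hx.monovary hy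
    have hre : ∑ l, x l * y (σ l) ≤ ∑ l, x l * y l := by
      simpa [smul_eq_mul] using hmono.sum_smul_comp_perm_le_sum_smul (σ := σ)
    have hperm : ∑ l, (y (σ l)) ^ 2 = ∑ l, (y l) ^ 2 :=
      Equiv.sum_comp σ fun l => (y l) ^ 2
    have e1 : ∑ l, (x l - y l) ^ 2
        = ∑ l, (x l) ^ 2 + ∑ l, (y l) ^ 2 - 2 * ∑ l, x l * y l := by
      rw [← Finset.sum_add_distrib, Finset.mul_sum, ← Finset.sum_sub_distrib]
      exact Finset.sum_congr rfl fun l _ => by ring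
    have e2 : ∑ l, (x l - y (σ l)) ^ 2
        = ∑ l, (x l) ^ 2 + ∑ l, (y (σ l)) ^ 2 - 2 * ∑ l, x l * y (σ l) := by
      rw [← Finset.sum_add_distrib, Finset.mul_sum, ← Finset.sum_sub_distrib]
      exact Finset.sum_congr rfl fun l _ => by ring
    rw [e1, e2, hperm]
    linarith

/-- Decomposition of the sum of squared matching distances from a monotone tuple `θ` to a
family of monotone tuples `b i`: it equals `n` times the distance from `θ` to the
coordinatewise mean (the topological centroid) plus a constant independent of `θ`. -/
theorem matching_distance_decomposition (n m : ℕ) (hn : 1 ≤ n)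
    (θ : Fin m → ℝ) (b : Fin n → Fin m → ℝ)
    (hθ : Monotone θ) (hb : ∀ i, Monotone (b i)) :
    ∑ i, matchDist m θ (b i) =
      (n : ℝ) * matchDist m θ (fun l => (∑ i, b i l) / (n : ℝ)) +
        ∑ i, matchDist m (fun l => (∑ j, b j l) / (n : ℝ)) (b i) := by
  have hnpos : (0 : ℝ) < n := by exact_mod_cast hn
  set c : Fin m → ℝ := fun l => (∑ i, b i l) / (n : ℝ) with hc
  have hcmono : Monotone c := by
    intro a a' haa
    exact div_le_div_of_nonneg_right (Finset.sum_le_sum fun i _ => hb i haa) hnpos.le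
  have hkey : ∀ l : Fin m, ∑ i, (θ l - b i l) ^ 2
      = (n : ℝ) * (θ l - c l) ^ 2 + ∑ i, (c l - b i l) ^ 2 := by
    intro l
    have hnc : (n : ℝ) * c l = ∑ i, b i l := by
      simp only [hc]
      field_simp [hnpos.ne']
    have expand : ∀ i : Fin n, (θ l - b i l) ^ 2
        = (θ l - c l) ^ 2 + 2 * (θ l - c l) * (c l - b i l) + (c l - b i l) ^ 2 := by
      intro i; ring
    calc ∑ i, (θ l - b i l) ^ 2
        = ∑ i, ((θ l - c l) ^ 2 + 2 * (θ l - c l) * (c l - b i l) + (c l - b i l) ^ 2) :=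
          Finset.sum_congr rfl fun i _ => expand i
      _ = (n : ℝ) * (θ l - c l) ^ 2 + 2 * (θ l - c l) * ((n : ℝ) * c l - ∑ i, b i l)
            + ∑ i, (c l - b i l) ^ 2 := by
          rw [Finset.sum_add_distrib, Finset.sum_add_distrib, Finset.sum_const,
            ← Finset.mul_sum, Finset.sum_sub_distrib, Finset.sum_const]
          simp only [Finset.card_univ, Fintype.card_fin, nsmul_eq_mul]
      _ = (n : ℝ) * (θ l - c l) ^ 2 + ∑ i, (c l - b i l) ^ 2 := by
          rw [hnc]; ring
  rw [matchDist_of_monotone m θ c hθ hcmono]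
  calc ∑ i, matchDist m θ (b i)
      = ∑ i, ∑ l, (θ l - b i l) ^ 2 :=
        Finset.sum_congr rfl fun i _ => matchDist_of_monotone m θ (b i) hθ (hb i)
    _ = ∑ l, ∑ i, (θ l - b i l) ^ 2 := Finset.sum_comm
    _ = ∑ l, ((n : ℝ) * (θ l - c l) ^ 2 + ∑ i, (c l - b i l) ^ 2) :=
        Finset.sum_congr rfl fun l _ => hkey l
    _ = (n : ℝ) * ∑ l, (θ l - c l) ^ 2 + ∑ i, ∑ l, (c l - b i l) ^ 2 := by
        rw [Finset.sum_add_distrib, ← Finset.mul_sum, Finset.sum_comm]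
    _ = (n : ℝ) * ∑ l, (θ l - c l) ^ 2 + ∑ i, matchDist m c (b i) := by
        rw [Finset.sum_congr rfl fun i _ =>
          (matchDist_of_monotone m c (b i) hcmono (hb i)).symm]
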